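/- Let p ≥ 0, q ≥ 1, s ≥ 1 be integers and r = 1/(p + 2qs + 2√((p+qs)qs)). If p', q', q'' are integers with 0 ≤ p' ≤ p, 0 ≤ q' ≤ q, 0 ≤ q'' ≤ q and (p', q', q'') ≠ (p, q, 0), then p'·r + (2q' - q'')·(1 - p·r)/(2q) < 1. -/

import Mathlib

theorem stmt_9 (p q s : ℕ) (hq : 1 ≤ q) (hs : 1 ≤ s)
    (r : ℝ)
    (hr : r = 1 / ((p : ℝ) + 2 * q * s + 2 * Real.sqrt (((p : ℝ) + q * s) * q * s)))
    (p' q' q'' : ℕ) (hp' : p' ≤ p) (hq' : q' ≤ q) (hq''le : q'' ≤ q)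
    (hne : (p', q', q'') ≠ (p, q, 0)) :
    (p' : ℝ) * r + (2 * (q' : ℝ) - (q'' : ℝ)) * ((1 - (p : ℝ) * r) / (2 * q)) < 1 := by
  have hq1 : (1:ℝ) ≤ q := by exact_mod_cast hq
  have hs1 : (1:ℝ) ≤ s := by exact_mod_cast hs
  have hp0 : (0:ℝ) ≤ p := Nat.cast_nonneg p
  have hqs : (1:ℝ) ≤ (q:ℝ) * s := by nlinarith
  have hsqrt : (0:ℝ) ≤ Real.sqrt (((p : ℝ) + q * s) * q * s) := Real.sqrt_nonneg _
  set S := Real.sqrt (((p : ℝ) + q * s) * q * s) with hS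
  have hD : (0:ℝ) < (p : ℝ) + 2 * q * s + 2 * S := by nlinarith
  have hr0 : 0 < r := by rw [hr]; positivity
  have hpr : (p:ℝ) * r < 1 := by
    rw [hr]
    rw [mul_one_div, div_lt_one hD]
    nlinarith
  have h2q : (0:ℝ) < 2 * q := by linarith
  have hlam : 0 < (1 - (p : ℝ) * r) / (2 * q) := div_pos (by linarith) h2q
  set L := (1 - (p : ℝ) * r) / (2 * q) with hL
  have hqne : (q:ℝ) ≠ 0 := by positivity
  have hid : (p:ℝ) * r + 2 * q * L = 1 := by
    rw [hL]; field_simp; ring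
  have hcases : p' < p ∨ q' < q ∨ 1 ≤ q'' := by
    simp only [ne_eq, Prod.mk.injEq, not_and] at hne
    omega
  have hp'R : (p':ℝ) ≤ p := by exact_mod_cast hp'
  have hq'R : (q':ℝ) ≤ q := by exact_mod_cast hq'
  have hq''0 : (0:ℝ) ≤ q'' := Nat.cast_nonneg _
  rcases hcases with h | h | h
  · have : (p':ℝ) ≤ (p:ℝ) - 1 := by
      have : (p':ℝ) + 1 ≤ p := by exact_mod_cast h
      linarith
    nlinarith [mul_le_mul_of_nonneg_right this hr0.le,
      mul_le_mul_of_nonneg_right (show 2*(q':ℝ) - q'' ≤ 2*q by linarith) hlam.le]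
  · have : (q':ℝ) ≤ (q:ℝ) - 1 := by
      have : (q':ℝ) + 1 ≤ q := by exact_mod_cast h
      linarith
    nlinarith [mul_le_mul_of_nonneg_right hp'R hr0.le,
      mul_le_mul_of_nonneg_right (show 2*(q':ℝ) - q'' ≤ 2*q - 2 by linarith) hlam.le]
  · have : (1:ℝ) ≤ q'' := by exact_mod_cast h
    nlinarith [mul_le_mul_of_nonneg_right hp'R hr0.le,
      mul_le_mul_of_nonneg_right (show 2*(q':ℝ) - q'' ≤ 2*q - 1 by linarith) hlam.le]
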